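/- arXiv:1505.03290 — 2 statements merged into one kernel-verified Lean document; each statement's English description precedes it below -/
import Mathlib

section
/- Let R, R' be complex n×n matrices such that R has rank n−1, det(R') = 0, and ‖R − R'‖ ≤ ε/‖R†‖ for some 0 ≤ ε < 1 (operator norm, where R† is the Moore–Penrose pseudoinverse). Then R' has rank n−1 and ‖R†‖/(1+ε) ≤ ‖R'†‖ ≤ ‖R†‖/(1−ε). -/
set_option maxHeartbeats 1000000

open Matrix
/-- The spectral (operator) norm of a complex matrix. -/
noncomputable def opNorm {n : ℕ} (M : Matrix (Fin n) (Fin n) ℂ) : ℝ :=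
  ‖Matrix.toEuclideanCLM (𝕜 := ℂ) M‖

/-- `Rd` is the Moore–Penrose pseudoinverse of `R` (the four Penrose equations,
which characterize it uniquely). -/
def IsMoorePenroseInv {n : ℕ} (R Rd : Matrix (Fin n) (Fin n) ℂ) : Prop :=
  R * Rd * R = R ∧ Rd * R * Rd = Rd ∧ (R * Rd)ᴴ = R * Rd ∧ (Rd * R)ᴴ = Rd * R

namespace PseudoInvPerturbAux

open Module

noncomputable section
variable {n : ℕ}
local notation "E" => EuclideanSpace ℂ (Fin n)
local notation "⟪" x ", " y "⟫" => @inner ℂ _ _ x y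

lemma finrank_range_clm (M : Matrix (Fin n) (Fin n) ℂ) :
    finrank ℂ (LinearMap.range (toEuclideanCLM (𝕜 := ℂ) M).toLinearMap) = M.rank := by
  rw [Matrix.rank_eq_finrank_range_toLin M (PiLp.basisFun 2 ℂ (Fin n)) (PiLp.basisFun 2 ℂ (Fin n))]
  rfl

lemma rank_le' (M : Matrix (Fin n) (Fin n) ℂ) : M.rank ≤ n := by
  simpa using M.rank_le_card_width

lemma finrank_ker_clm (M : Matrix (Fin n) (Fin n) ℂ) :
    finrank ℂ (LinearMap.ker (toEuclideanCLM (𝕜 := ℂ) M).toLinearMap) = n - M.rank := by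
  have h := LinearMap.finrank_range_add_finrank_ker ((toEuclideanCLM (𝕜 := ℂ) M) : E →ₗ[ℂ] E)
  have e1 : LinearMap.ker ((toEuclideanCLM (𝕜 := ℂ) M) : E →ₗ[ℂ] E)
      = LinearMap.ker (toEuclideanCLM (𝕜 := ℂ) M).toLinearMap := rfl
  have e2 : LinearMap.range ((toEuclideanCLM (𝕜 := ℂ) M) : E →ₗ[ℂ] E)
      = LinearMap.range (toEuclideanCLM (𝕜 := ℂ) M).toLinearMap := rfl
  rw [e1, e2, finrank_range_clm] at h
  have h3 : finrank ℂ E = n := by simp [finrank_euclideanSpace]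
  rw [h3] at h
  have := rank_le' M
  omega

lemma sa_inner {A : EuclideanSpace ℂ (Fin n) →L[ℂ] EuclideanSpace ℂ (Fin n)}
    (hA : IsSelfAdjoint A) (x y : E) : ⟪A x, y⟫ = ⟪x, A y⟫ := by
  conv_lhs => rw [← hA.star_eq, ContinuousLinearMap.star_eq_adjoint]
  rw [ContinuousLinearMap.adjoint_inner_left]

lemma proj_norm_le {P : EuclideanSpace ℂ (Fin n) →L[ℂ] EuclideanSpace ℂ (Fin n)}
    (hP2 : P * P = P) (hP : IsSelfAdjoint P) (y : E) : ‖P y‖ ≤ ‖y‖ := by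
  rcases eq_or_lt_of_le (norm_nonneg (P y)) with h | h
  · rw [← h]; exact norm_nonneg y
  have h1 : ‖P y‖ ^ 2 = RCLike.re ⟪P y, P y⟫ := by
    rw [inner_self_eq_norm_sq]
  have h2 : ⟪P y, P y⟫ = ⟪y, P y⟫ := by
    rw [sa_inner hP]
    congr 1
    calc P (P y) = (P * P) y := rfl
      _ = P y := by rw [hP2]
  have h3 : RCLike.re ⟪y, P y⟫ ≤ ‖y‖ * ‖P y‖ :=
    le_trans (RCLike.re_le_norm _) (norm_inner_le_norm y (P y))
  rw [h2] at h1
  nlinarith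

lemma exists_ne_zero_inf (V W : Submodule ℂ (EuclideanSpace ℂ (Fin n)))
    (h : n < finrank ℂ V + finrank ℂ W) :
    ∃ x : E, x ∈ V ∧ x ∈ W ∧ x ≠ 0 := by
  have hs := Submodule.finrank_sup_add_finrank_inf_eq V W
  have hle : finrank ℂ (V ⊔ W : Submodule ℂ (EuclideanSpace ℂ (Fin n))) ≤ n := by
    simpa [finrank_euclideanSpace] using Submodule.finrank_le (V ⊔ W)
  have hpos : 0 < finrank ℂ (V ⊓ W : Submodule ℂ (EuclideanSpace ℂ (Fin n))) := by omega
  obtain ⟨x, hx0⟩ := Module.finrank_pos_iff_exists_ne_zero.mp hpos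
  exact ⟨(x : E), x.2.1, x.2.2, fun h0 => hx0 (Subtype.ext h0)⟩

lemma near_min (T S : EuclideanSpace ℂ (Fin n) →L[ℂ] EuclideanSpace ℂ (Fin n))
    (hST : S * T * S = S) (hTS : T * S * T = T) (hP : IsSelfAdjoint (T * S))
    (hS : 0 < ‖S‖) {δ : ℝ} (hδ : 0 < δ) :
    ∃ v : E, ‖v‖ = 1 ∧ (S * T) v = v ∧ ‖T v‖ ≤ ‖S‖⁻¹ + δ := by
  have hd : (0:ℝ) < ‖S‖⁻¹ + δ := by positivity
  have hc : (‖S‖⁻¹ + δ)⁻¹ < ‖S‖ := by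
    rw [inv_lt_comm₀ hd hS]
    exact lt_add_of_pos_right _ hδ
  obtain ⟨y, hy1, hy2⟩ := S.exists_lt_apply_of_lt_opNorm hc
  have hSy : 0 < ‖S y‖ := lt_trans (by positivity) hy2
  have hSyinv : ‖S y‖⁻¹ < ‖S‖⁻¹ + δ := (inv_lt_comm₀ hSy hd).mpr hy2
  refine ⟨(‖S y‖⁻¹ : ℂ) • S y, ?_, ?_, ?_⟩
  · rw [norm_smul]
    simp only [norm_inv, Complex.norm_real, norm_norm]
    exact inv_mul_cancel₀ hSy.ne'
  · rw [_root_.map_smul]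
    congr 1
    calc (S * T) (S y) = (S * T * S) y := rfl
      _ = S y := by rw [hST]
  · rw [_root_.map_smul, norm_smul]
    simp only [norm_inv, Complex.norm_real, norm_norm]
    have hP2 : (T * S) * (T * S) = T * S := by
      calc (T * S) * (T * S) = (T * S * T) * S := by rw [← mul_assoc]
        _ = T * S := by rw [hTS]
    have : ‖T (S y)‖ ≤ ‖y‖ := by
      calc ‖T (S y)‖ = ‖(T * S) y‖ := rfl
        _ ≤ ‖y‖ := proj_norm_le hP2 hP y
    calc ‖S y‖⁻¹ * ‖T (S y)‖ ≤ ‖S y‖⁻¹ * 1 := by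
          apply mul_le_mul_of_nonneg_left _ (by positivity)
          exact le_trans this (le_of_lt hy1)
      _ ≤ ‖S‖⁻¹ + δ := by rw [mul_one]; exact le_of_lt hSyinv

lemma fact1 (T S : EuclideanSpace ℂ (Fin n) →L[ℂ] EuclideanSpace ℂ (Fin n))
    (hS : 0 < ‖S‖) (x : E) : ‖S‖⁻¹ * ‖(S * T) x‖ ≤ ‖T x‖ := by
  have : ‖(S * T) x‖ ≤ ‖S‖ * ‖T x‖ := by
    calc ‖(S * T) x‖ = ‖S (T x)‖ := rfl
      _ ≤ ‖S‖ * ‖T x‖ := S.le_opNorm _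
  rw [inv_mul_le_iff₀ hS]
  exact this

lemma rank_stable (T S T' : EuclideanSpace ℂ (Fin n) →L[ℂ] EuclideanSpace ℂ (Fin n))
    (hST : S * T * S = S) (hS : 0 < ‖S‖)
    (hrk : finrank ℂ (LinearMap.range (S * T).toLinearMap) = n - 1)
    (hker2 : 2 ≤ finrank ℂ (LinearMap.ker T'.toLinearMap))
    (hTT' : ‖T - T'‖ < ‖S‖⁻¹) (hn : 2 ≤ n) : False := by
  obtain ⟨x, hxV, hxW, hx0⟩ := exists_ne_zero_inf (LinearMap.range (S * T).toLinearMap)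
    (LinearMap.ker T'.toLinearMap) (by omega)
  have hQQ : (S * T) * (S * T) = S * T := by
    calc (S * T) * (S * T) = (S * T * S) * T := by rw [← mul_assoc]
      _ = S * T := by rw [hST]
  have hQx : (S * T) x = x := by
    obtain ⟨z, hz⟩ := hxV
    calc (S * T) x = ((S * T) * (S * T)) z := by rw [← hz]; rfl
      _ = (S * T) z := by rw [hQQ]
      _ = x := hz
  have hxpos : 0 < ‖x‖ := norm_pos_iff.mpr hx0
  have h1 : ‖S‖⁻¹ * ‖x‖ ≤ ‖T x‖ := by
    calc ‖S‖⁻¹ * ‖x‖ = ‖S‖⁻¹ * ‖(S * T) x‖ := by rw [hQx]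
      _ ≤ ‖T x‖ := fact1 T S hS x
  have hTpx : T' x = 0 := hxW
  have h2 : ‖T x‖ ≤ ‖T - T'‖ * ‖x‖ := by
    calc ‖T x‖ = ‖(T - T') x‖ := by
          rw [ContinuousLinearMap.sub_apply, hTpx, sub_zero]
      _ ≤ ‖T - T'‖ * ‖x‖ := (T - T').le_opNorm x
  have h3 : ‖T - T'‖ * ‖x‖ < ‖S‖⁻¹ * ‖x‖ := by
    exact mul_lt_mul_of_pos_right hTT' hxpos
  linarith

lemma key_ineq (T S T' S' : EuclideanSpace ℂ (Fin n) →L[ℂ] EuclideanSpace ℂ (Fin n))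
    (hST : S * T * S = S)
    (hT'S' : T' * S' * T' = T') (hS'T' : S' * T' * S' = S')
    (hP' : IsSelfAdjoint (T' * S')) (hQ' : IsSelfAdjoint (S' * T'))
    (hS : 0 < ‖S‖) (hS' : 0 < ‖S'‖)
    (hrk : finrank ℂ (LinearMap.range (S * T).toLinearMap) = n - 1)
    (hker : finrank ℂ (LinearMap.ker T'.toLinearMap) = 1)
    (hn : 2 ≤ n) :
    ‖S‖⁻¹ ≤ ‖S'‖⁻¹ + ‖T - T'‖ := by
  refine le_of_forall_pos_le_add fun δ hδ => ?_
  obtain ⟨v, hv1, hvQ, hvT⟩ := near_min T' S' hS'T' hT'S' hP' hS' hδ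
  have hv0 : v ≠ 0 := fun h => by simp [h] at hv1
  have hvker : v ∉ LinearMap.ker T'.toLinearMap := by
    intro h
    have h0 : T' v = 0 := h
    have : (S' * T') v = 0 := by
      calc (S' * T') v = S' (T' v) := rfl
        _ = 0 := by rw [h0, map_zero]
    rw [hvQ] at this
    exact hv0 this
  have hspan : finrank ℂ (ℂ ∙ v) = 1 := finrank_span_singleton hv0
  have hinf : (ℂ ∙ v) ⊓ LinearMap.ker T'.toLinearMap = ⊥ := by
    rw [Submodule.eq_bot_iff]
    rintro y ⟨hy1, hy2⟩
    obtain ⟨c, rfl⟩ := Submodule.mem_span_singleton.mp hy1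
    rcases eq_or_ne c 0 with rfl | hc
    · simp
    · exfalso
      apply hvker
      have : T' (c • v) = 0 := hy2
      rw [_root_.map_smul, smul_eq_zero] at this
      rcases this with h | h
      · exact absurd h hc
      · exact LinearMap.mem_ker.mpr h
  have hW : finrank ℂ ((ℂ ∙ v) ⊔ LinearMap.ker T'.toLinearMap : Submodule ℂ (EuclideanSpace ℂ (Fin n))) = 2 := by
    have := Submodule.finrank_sup_add_finrank_inf_eq (ℂ ∙ v) (LinearMap.ker T'.toLinearMap)
    rw [hinf, hspan, hker] at this
    simpa using this
  obtain ⟨x, hxV, hxW, hx0⟩ := exists_ne_zero_inf (LinearMap.range (S * T).toLinearMap)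
    ((ℂ ∙ v) ⊔ LinearMap.ker T'.toLinearMap) (by omega)
  have hQQ : (S * T) * (S * T) = S * T := by
    calc (S * T) * (S * T) = (S * T * S) * T := by rw [← mul_assoc]
      _ = S * T := by rw [hST]
  have hQx : (S * T) x = x := by
    obtain ⟨z, hz⟩ := hxV
    calc (S * T) x = ((S * T) * (S * T)) z := by rw [← hz]; rfl
      _ = (S * T) z := by rw [hQQ]
      _ = x := hz
  have hxpos : 0 < ‖x‖ := norm_pos_iff.mpr hx0
  obtain ⟨y, hy, k, hk, hx_eq⟩ := Submodule.mem_sup.mp hxW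
  obtain ⟨a, rfl⟩ := Submodule.mem_span_singleton.mp hy
  have hkker : T' k = 0 := hk
  have hvk : ⟪v, k⟫ = 0 := by
    have h1 : ⟪(S' * T') v, k⟫ = ⟪v, (S' * T') k⟫ := sa_inner hQ' v k
    rw [hvQ] at h1
    rw [h1]
    have : (S' * T') k = 0 := by
      calc (S' * T') k = S' (T' k) := rfl
        _ = 0 := by rw [hkker, map_zero]
    rw [this, inner_zero_right]
  have ha : ‖a‖ ≤ ‖x‖ := by
    have hps : ‖a • v + k‖ ^ 2 = ‖a • v‖ ^ 2 + 2 * RCLike.re ⟪a • v, k⟫ + ‖k‖ ^ 2 :=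
      norm_add_sq (𝕜 := ℂ) (a • v) k
    have hz : ⟪a • v, k⟫ = 0 := by rw [inner_smul_left, hvk, mul_zero]
    rw [hz] at hps
    simp only [map_zero, mul_zero, add_zero] at hps
    rw [norm_smul, hv1, mul_one] at hps
    rw [← hx_eq]
    nlinarith [norm_nonneg (a • v + k), norm_nonneg a, sq_nonneg ‖k‖, norm_nonneg ‖k‖]
  have hTpx : ‖T' x‖ ≤ ‖x‖ * (‖S'‖⁻¹ + δ) := by
    have hTx_eq : T' x = a • T' v := by
      rw [← hx_eq, map_add, _root_.map_smul, hkker, add_zero]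
    rw [hTx_eq, norm_smul]
    exact mul_le_mul ha hvT (norm_nonneg _) (norm_nonneg _)
  have h1 : ‖S‖⁻¹ * ‖x‖ ≤ ‖T x‖ := by
    calc ‖S‖⁻¹ * ‖x‖ = ‖S‖⁻¹ * ‖(S * T) x‖ := by rw [hQx]
      _ ≤ ‖T x‖ := fact1 T S hS x
  have h2 : ‖T x‖ ≤ ‖T' x‖ + ‖T - T'‖ * ‖x‖ := by
    calc ‖T x‖ = ‖T' x + (T - T') x‖ := by
          rw [ContinuousLinearMap.sub_apply]; congr 1; abel
      _ ≤ ‖T' x‖ + ‖(T - T') x‖ := norm_add_le _ _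
      _ ≤ ‖T' x‖ + ‖T - T'‖ * ‖x‖ := by
          exact add_le_add_right ((T - T').le_opNorm x) _
  have hfinal : ‖S‖⁻¹ * ‖x‖ ≤ (‖S'‖⁻¹ + δ + ‖T - T'‖) * ‖x‖ := by
    calc ‖S‖⁻¹ * ‖x‖ ≤ ‖T x‖ := h1
      _ ≤ ‖T' x‖ + ‖T - T'‖ * ‖x‖ := h2
      _ ≤ ‖x‖ * (‖S'‖⁻¹ + δ) + ‖T - T'‖ * ‖x‖ := add_le_add_left hTpx _
      _ = (‖S'‖⁻¹ + δ + ‖T - T'‖) * ‖x‖ := by ring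
  rw [mul_comm (‖S‖⁻¹) ‖x‖, mul_comm _ ‖x‖] at hfinal
  have hle := le_of_mul_le_mul_left hfinal hxpos
  linarith


lemma matrix_eq_zero_of_rank_eq_zero {M : Matrix (Fin n) (Fin n) ℂ} (h : M.rank = 0) : M = 0 := by
  have h1 : LinearMap.range M.mulVecLin = ⊥ := Submodule.finrank_eq_zero.mp h
  ext i j
  have h2 : M.mulVecLin (Pi.single j 1) = 0 := by
    have h3 := LinearMap.range_eq_bot.mp h1
    rw [h3]; rfl
  have h3 := congrFun h2 i
  simpa [Matrix.mulVecLin_apply, Matrix.mulVec_single] using h3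

lemma rank_lt_of_det_eq_zero {M : Matrix (Fin n) (Fin n) ℂ} (h : M.det = 0) : M.rank < n := by
  by_contra hle
  push_neg at hle
  have hrank : M.rank = n := le_antisymm (rank_le' M) hle
  have htop : LinearMap.range M.mulVecLin = ⊤ := by
    apply Submodule.eq_top_of_finrank_eq
    have : finrank ℂ (Fin n → ℂ) = n := by simp
    rw [this]
    exact hrank
  have hsurj : Function.Surjective M.mulVec := by
    have := LinearMap.range_eq_top.mp htop
    exact this
  have hunit := Matrix.mulVec_surjective_iff_isUnit.mp hsurj
  exact ((Matrix.isUnit_iff_isUnit_det M).mp hunit).ne_zero h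

end
end PseudoInvPerturbAux

open PseudoInvPerturbAux Module in
/-- If `R` has rank `n−1`, `det R' = 0` and `‖R − R'‖ ≤ ε/‖R†‖` with `0 ≤ ε < 1`,
then `R'` has rank `n−1` and `‖R†‖/(1+ε) ≤ ‖R'†‖ ≤ ‖R†‖/(1−ε)`. -/
theorem pseudoinverse_norm_perturbation {n : ℕ} (R R' Rd Rd' : Matrix (Fin n) (Fin n) ℂ)
    (hRd : IsMoorePenroseInv R Rd) (hRd' : IsMoorePenroseInv R' Rd')
    (hrank : R.rank = n - 1) (hdet : R'.det = 0)
    (ε : ℝ) (hε0 : 0 ≤ ε) (hε1 : ε < 1)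
    (hclose : opNorm (R - R') ≤ ε / opNorm Rd) :
    R'.rank = n - 1 ∧
      opNorm Rd / (1 + ε) ≤ opNorm Rd' ∧ opNorm Rd' ≤ opNorm Rd / (1 - ε) := by
  by_cases hn : 2 ≤ n
  swap
  · -- degenerate cases n = 0, n = 1
    have hn1 : n ≤ 1 := by omega
    interval_cases n
    · have hR' : R'.rank = 0 := by
        have := rank_le' R'
        omega
      have hRd0 : Rd = 0 := by ext i j; exact i.elim0
      have hRd'0 : Rd' = 0 := by ext i j; exact i.elim0
      have h1 : opNorm Rd = 0 := by rw [hRd0, opNorm, _root_.map_zero, norm_zero]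
      have h2 : opNorm Rd' = 0 := by rw [hRd'0, opNorm, _root_.map_zero, norm_zero]
      rw [h1, h2]
      exact ⟨hR', by simp, by simp⟩
    · have hR0 : R = 0 := matrix_eq_zero_of_rank_eq_zero (by simpa using hrank)
      have hRd0 : Rd = 0 := by
        have h := hRd.2.1
        rw [hR0] at h
        simpa using h.symm
      have hR'0 : R' = 0 := by
        ext i j
        fin_cases i; fin_cases j
        simpa [Matrix.det_fin_one] using hdet
      have hRd'0 : Rd' = 0 := by
        have h := hRd'.2.1
        rw [hR'0] at h
        simpa using h.symm
      have h1 : opNorm Rd = 0 := by rw [hRd0, opNorm, _root_.map_zero, norm_zero]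
      have h2 : opNorm Rd' = 0 := by rw [hRd'0, opNorm, _root_.map_zero, norm_zero]
      rw [h1, h2]
      exact ⟨by simp [hR'0, Matrix.rank_zero], by simp, by simp⟩
  -- main case n ≥ 2
  set φ : Matrix (Fin n) (Fin n) ℂ ≃⋆ₐ[ℂ]
      (EuclideanSpace ℂ (Fin n) →L[ℂ] EuclideanSpace ℂ (Fin n)) :=
    Matrix.toEuclideanCLM (𝕜 := ℂ) with hφ
  set T := φ R with hT
  set T' := φ R' with hT'
  set S := φ Rd with hS
  set S' := φ Rd' with hS'
  -- Penrose equations, CLM versions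
  have hTST : T * S * T = T := by
    have := congrArg φ hRd.1; rwa [_root_.map_mul, _root_.map_mul] at this
  have hSTS : S * T * S = S := by
    have := congrArg φ hRd.2.1; rwa [_root_.map_mul, _root_.map_mul] at this
  have hT'S'T' : T' * S' * T' = T' := by
    have := congrArg φ hRd'.1; rwa [_root_.map_mul, _root_.map_mul] at this
  have hS'T'S' : S' * T' * S' = S' := by
    have := congrArg φ hRd'.2.1; rwa [_root_.map_mul, _root_.map_mul] at this
  have hP : IsSelfAdjoint (T * S) := by
    show star (T * S) = T * S
    rw [← _root_.map_mul, ← map_star]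
    congr 1
    simpa [Matrix.star_eq_conjTranspose] using hRd.2.2.1
  have hQ : IsSelfAdjoint (S * T) := by
    show star (S * T) = S * T
    rw [← _root_.map_mul, ← map_star]
    congr 1
    simpa [Matrix.star_eq_conjTranspose] using hRd.2.2.2
  have hP' : IsSelfAdjoint (T' * S') := by
    show star (T' * S') = T' * S'
    rw [← _root_.map_mul, ← map_star]
    congr 1
    simpa [Matrix.star_eq_conjTranspose] using hRd'.2.2.1
  have hQ' : IsSelfAdjoint (S' * T') := by
    show star (S' * T') = S' * T'
    rw [← _root_.map_mul, ← map_star]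
    congr 1
    simpa [Matrix.star_eq_conjTranspose] using hRd'.2.2.2
  -- positivity of ‖S‖
  have hRdne : Rd ≠ 0 := by
    intro h0
    have h := hRd.1
    rw [h0] at h
    simp only [Matrix.mul_zero, Matrix.zero_mul] at h
    rw [← h] at hrank
    rw [Matrix.rank_zero] at hrank
    omega
  have hSpos : 0 < ‖S‖ := by
    rw [norm_pos_iff]
    intro h0
    exact hRdne (φ.injective (by rw [_root_.map_zero]; exact hS ▸ h0))
  -- rank of the projection S * T
  have hQrank : (Rd * R).rank = n - 1 := by
    apply le_antisymm
    · rw [← hrank]; exact Matrix.rank_mul_le_right Rd R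
    · have e : R * (Rd * R) = R := by rw [← Matrix.mul_assoc, hRd.1]
      calc n - 1 = R.rank := hrank.symm
        _ = (R * (Rd * R)).rank := by rw [e]
        _ ≤ (Rd * R).rank := Matrix.rank_mul_le_right _ _
  have hrkQ : finrank ℂ (LinearMap.range (S * T).toLinearMap) = n - 1 := by
    rw [hS, hT, ← _root_.map_mul]
    rw [finrank_range_clm]
    exact hQrank
  -- ‖T - T'‖ bound
  have hTT'eq : opNorm (R - R') = ‖T - T'‖ := by
    rw [opNorm, hT, hT', ← _root_.map_sub]
  have hTT'le : ‖T - T'‖ ≤ ε * ‖S‖⁻¹ := by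
    rw [← hTT'eq]
    calc opNorm (R - R') ≤ ε / opNorm Rd := hclose
      _ = ε * ‖S‖⁻¹ := by rw [div_eq_mul_inv]; rfl
  have hTT'lt : ‖T - T'‖ < ‖S‖⁻¹ := by
    calc ‖T - T'‖ ≤ ε * ‖S‖⁻¹ := hTT'le
      _ < 1 * ‖S‖⁻¹ := mul_lt_mul_of_pos_right hε1 (inv_pos.mpr hSpos)
      _ = ‖S‖⁻¹ := one_mul _
  -- rank of R'
  have hlt : R'.rank < n := rank_lt_of_det_eq_zero hdet
  have hge : n - 1 ≤ R'.rank := by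
    by_contra hlt2
    push_neg at hlt2
    refine rank_stable T S T' hSTS hSpos hrkQ ?_ hTT'lt hn
    rw [hT', finrank_ker_clm]
    omega
  have hrank' : R'.rank = n - 1 := by omega
  -- positivity of ‖S'‖
  have hRd'ne : Rd' ≠ 0 := by
    intro h0
    have h := hRd'.1
    rw [h0] at h
    simp only [Matrix.mul_zero, Matrix.zero_mul] at h
    rw [← h, Matrix.rank_zero] at hrank'
    omega
  have hS'pos : 0 < ‖S'‖ := by
    rw [norm_pos_iff]
    intro h0
    exact hRd'ne (φ.injective (by rw [_root_.map_zero]; exact hS' ▸ h0))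
  -- rank of the projection S' * T'
  have hQ'rank : (Rd' * R').rank = n - 1 := by
    apply le_antisymm
    · rw [← hrank']; exact Matrix.rank_mul_le_right Rd' R'
    · have e : R' * (Rd' * R') = R' := by rw [← Matrix.mul_assoc, hRd'.1]
      calc n - 1 = R'.rank := hrank'.symm
        _ = (R' * (Rd' * R')).rank := by rw [e]
        _ ≤ (Rd' * R').rank := Matrix.rank_mul_le_right _ _
  have hrkQ' : finrank ℂ (LinearMap.range (S' * T').toLinearMap) = n - 1 := by
    rw [hS', hT', ← _root_.map_mul, finrank_range_clm]
    exact hQ'rank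
  have hker' : finrank ℂ (LinearMap.ker T'.toLinearMap) = 1 := by
    rw [hT', finrank_ker_clm, hrank']
    omega
  have hker : finrank ℂ (LinearMap.ker T.toLinearMap) = 1 := by
    rw [hT, finrank_ker_clm, hrank]
    omega
  -- the two key inequalities
  have dir1 : ‖S‖⁻¹ ≤ ‖S'‖⁻¹ + ‖T - T'‖ :=
    key_ineq T S T' S' hSTS hT'S'T' hS'T'S' hP' hQ' hSpos hS'pos hrkQ hker' hn
  have dir2 : ‖S'‖⁻¹ ≤ ‖S‖⁻¹ + ‖T - T'‖ := by
    have := key_ineq T' S' T S hS'T'S' hTST hSTS hP hQ hS'pos hSpos hrkQ' hker hn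
    rwa [norm_sub_rev] at this
  -- final arithmetic
  have hOp : opNorm Rd = ‖S‖ := rfl
  have hOp' : opNorm Rd' = ‖S'‖ := rfl
  set a := ‖S‖
  set b := ‖S'‖
  have h2' : b⁻¹ ≤ (1 + ε) * a⁻¹ := by
    have : b⁻¹ ≤ a⁻¹ + ε * a⁻¹ := by linarith
    linarith [this]
  have h1' : (1 - ε) * a⁻¹ ≤ b⁻¹ := by
    have : a⁻¹ ≤ b⁻¹ + ε * a⁻¹ := by linarith
    linarith [this]
  refine ⟨hrank', ?_, ?_⟩
  · rw [hOp, hOp']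
    rw [div_le_iff₀ (by linarith : (0:ℝ) < 1 + ε)]
    calc a = a * (b * b⁻¹) := by rw [mul_inv_cancel₀ (ne_of_gt hS'pos), mul_one]
      _ = (a * b) * b⁻¹ := by ring
      _ ≤ (a * b) * ((1 + ε) * a⁻¹) :=
        mul_le_mul_of_nonneg_left h2' (by positivity)
      _ = b * (1 + ε) * (a * a⁻¹) := by ring
      _ = b * (1 + ε) := by rw [mul_inv_cancel₀ (ne_of_gt hSpos), mul_one]
  · rw [hOp, hOp']
    rw [le_div_iff₀ (by linarith : (0:ℝ) < 1 - ε)]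
    calc b * (1 - ε) = (a * b) * ((1 - ε) * a⁻¹) := by
          rw [show (a * b) * ((1 - ε) * a⁻¹) = b * (1 - ε) * (a * a⁻¹) from by ring,
            mul_inv_cancel₀ (ne_of_gt hSpos), mul_one]
      _ ≤ (a * b) * b⁻¹ := mul_le_mul_of_nonneg_left h1' (by positivity)
      _ = a * (b * b⁻¹) := by ring
      _ = a := by rw [mul_inv_cancel₀ (ne_of_gt hS'pos), mul_one]
end

section
/- Let A₀, A₁ ∈ ℂ^{n×n} be ℝ-linearly independent and set A_t = (1−t)A₀ + tA₁ for t ∈ [0,1]. Then for every t, the derivative of the normalized path satisfies ‖d/dt (A_t/‖A_t‖_F)‖_F ≤ ‖A₀‖_F·‖A₁‖_F / ‖A_t‖_F². -/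
open Matrix
open scoped RealInnerProductSpace

attribute [local instance] Matrix.frobeniusNormedAddCommGroup Matrix.frobeniusNormedSpace

noncomputable def matInnerC (n : ℕ) : InnerProductSpace ℂ (Matrix (Fin n) (Fin n) ℂ) :=
  { toNormedSpace := Matrix.frobeniusNormedSpace
    inner := fun A B => ∑ i, ∑ j, inner ℂ (A i j) (B i j)
    norm_sq_eq_re_inner := fun A => by
      rw [frobenius_norm_def, ← Real.rpow_natCast, ← Real.rpow_mul (by positivity)]
      simp only [map_sum, inner_self_eq_norm_sq]
      norm_num
    conj_inner_symm := fun x y => by simp [map_sum, inner_conj_symm, mul_comm]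
    add_left := fun x y z => by
      simp only [Matrix.add_apply, inner_add_left, Finset.sum_add_distrib]
    smul_left := fun x y r => by
      simp only [Matrix.smul_apply, inner_smul_left, Finset.mul_sum] }

attribute [local instance] matInnerC

noncomputable def matInnerR (n : ℕ) : InnerProductSpace ℝ (Matrix (Fin n) (Fin n) ℂ) :=
  InnerProductSpace.rclikeToReal ℂ _

attribute [local instance] matInnerR

lemma deriv_normalized_segment_le_aux {F : Type*} [NormedAddCommGroup F]
    [InnerProductSpace ℝ F] (x0 x1 : F) (hind : LinearIndependent ℝ ![x0, x1]) (t : ℝ)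
    (D : F)
    (hD : HasDerivAt (fun s : ℝ => ‖(1 - s) • x0 + s • x1‖⁻¹ • ((1 - s) • x0 + s • x1)) D t) :
    ‖D‖ ≤ ‖x0‖ * ‖x1‖ / ‖(1 - t) • x0 + t • x1‖ ^ 2 := by
  set B : ℝ → F := fun s => (1 - s) • x0 + s • x1 with hBdef
  set u : F := x1 - x0 with hu
  -- B t ≠ 0
  have hBt0 : B t ≠ 0 := by
    intro h
    rw [Fintype.linearIndependent_iff] at hind
    have := hind ![1 - t, t] (by
      simpa [Fin.sum_univ_two] using h)
    have h0 := this 0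
    have h1 := this 1
    simp at h0 h1
    rw [h1] at h0
    norm_num at h0
  have hr : (0 : ℝ) < ‖B t‖ := norm_pos_iff.mpr hBt0
  have hrne : ‖B t‖ ≠ 0 := ne_of_gt hr
  -- derivative of B
  have hB : ∀ s : ℝ, HasDerivAt B u s := by
    intro s
    have h1 : HasDerivAt (fun s : ℝ => (1 - s) • x0) ((-1 : ℝ) • x0) s := by
      have : HasDerivAt (fun s : ℝ => 1 - s) (-1) s := by
        simpa using (hasDerivAt_id s).const_sub 1
      exact this.smul_const x0
    have h2 : HasDerivAt (fun s : ℝ => s • x1) ((1 : ℝ) • x1) s :=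
      (hasDerivAt_id s).smul_const x1
    have := h1.add h2
    refine this.congr_deriv ?_
    simp [hu]
    module
  -- derivative of q s = ⟪B s, B s⟫
  have hq : HasDerivAt (fun s => ⟪B s, B s⟫) (2 * ⟪u, B t⟫) t := by
    have := (hB t).inner ℝ (hB t)
    refine this.congr_deriv ?_
    rw [real_inner_comm (B t) u]
    ring
  have hqt : ⟪B t, B t⟫ ≠ 0 := by
    rw [real_inner_self_eq_norm_sq]
    positivity
  -- derivative of norm
  have hnorm : HasDerivAt (fun s => ‖B s‖) (⟪u, B t⟫ / ‖B t‖) t := by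
    have h := (Real.hasDerivAt_sqrt hqt).comp t hq
    have heq : (fun s => ‖B s‖) = fun s => Real.sqrt ⟪B s, B s⟫ := by
      funext s; rw [norm_eq_sqrt_real_inner]
    rw [heq]
    refine h.congr_deriv ?_
    rw [← norm_eq_sqrt_real_inner]
    field_simp
  -- derivative of inverse norm
  have hinv : HasDerivAt (fun s => ‖B s‖⁻¹) (-(⟪u, B t⟫ / ‖B t‖) / ‖B t‖ ^ 2) t :=
    hnorm.inv hrne
  -- derivative of the normalized path
  have hfull : HasDerivAt (fun s => ‖B s‖⁻¹ • B s)
      (‖B t‖⁻¹ • u + (-(⟪u, B t⟫ / ‖B t‖) / ‖B t‖ ^ 2) • B t) t := hinv.smul (hB t)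
  have hDeq : D = ‖B t‖⁻¹ • u + (-(⟪u, B t⟫ / ‖B t‖) / ‖B t‖ ^ 2) • B t := hD.unique hfull
  -- abbreviations
  set a2 : ℝ := ⟪x0, x0⟫ with ha2
  set b2 : ℝ := ⟪x1, x1⟫ with hb2
  set c : ℝ := ⟪x0, x1⟫ with hc
  set P : ℝ := ⟪u, u⟫ with hP
  set Q : ℝ := ⟪u, B t⟫ with hQ
  set R : ℝ := ⟪B t, B t⟫ with hR
  have hPv : P = b2 - 2 * c + a2 := by
    simp only [hP, hu, ha2, hb2, hc, inner_sub_left, inner_sub_right]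
    rw [real_inner_comm x1 x0]; ring
  have hQv : Q = t * b2 - (1 - t) * a2 + (1 - 2 * t) * c := by
    simp only [hQ, hu, hBdef, ha2, hb2, hc, inner_sub_left, inner_add_right,
      real_inner_smul_right]
    rw [real_inner_comm x1 x0]; ring
  have hRv : R = (1 - t) ^ 2 * a2 + 2 * t * (1 - t) * c + t ^ 2 * b2 := by
    simp only [hR, hBdef, ha2, hb2, hc, inner_add_left, inner_add_right,
      real_inner_smul_left, real_inner_smul_right]
    rw [real_inner_comm x1 x0]; ring
  set r : ℝ := ‖B t‖ with hrd
  have hr2 : R = r ^ 2 := by rw [hR, real_inner_self_eq_norm_sq]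
  -- norm squared of D
  have hDsq : ‖D‖ ^ 2 = (r⁻¹) ^ 2 * P + 2 * (r⁻¹ * (-(Q / r) / r ^ 2)) * Q
      + (-(Q / r) / r ^ 2) ^ 2 * R := by
    rw [← real_inner_self_eq_norm_sq, hDeq]
    have hcomm : (inner ℝ (B t) u : ℝ) = Q := by rw [hQ, real_inner_comm]
    simp only [inner_add_left, inner_add_right, real_inner_smul_left, real_inner_smul_right,
      ← hP, ← hQ, ← hR, hcomm]
    ring
  have ha : a2 = ‖x0‖ ^ 2 := real_inner_self_eq_norm_sq x0
  have hb : b2 = ‖x1‖ ^ 2 := real_inner_self_eq_norm_sq x1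
  -- key identity
  have hgram : P * R - Q ^ 2 = a2 * b2 - c ^ 2 := by
    rw [hPv, hQv, hRv]; ring
  have hDsq2 : ‖D‖ ^ 2 = (P * R - Q ^ 2) / r ^ 4 := by
    rw [hDsq, hr2]; field_simp; ring
  have hkey : ‖D‖ ^ 2 = (a2 * b2 - c ^ 2) / r ^ 4 := by rw [hDsq2, hgram]
  have hr4 : (0 : ℝ) < r ^ 4 := by positivity
  have hle : ‖D‖ ^ 2 ≤ (‖x0‖ * ‖x1‖ / r ^ 2) ^ 2 := by
    have hrw : (‖x0‖ * ‖x1‖ / r ^ 2) ^ 2 = ‖x0‖ ^ 2 * ‖x1‖ ^ 2 / r ^ 4 := by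
      field_simp
    rw [hkey, ha, hb, hrw]
    exact (div_le_div_iff_of_pos_right hr4).mpr (by nlinarith [sq_nonneg c])
  have hrhs : (0 : ℝ) ≤ ‖x0‖ * ‖x1‖ / r ^ 2 := by positivity
  calc ‖D‖ = Real.sqrt (‖D‖ ^ 2) := (Real.sqrt_sq (norm_nonneg D)).symm
    _ ≤ Real.sqrt ((‖x0‖ * ‖x1‖ / r ^ 2) ^ 2) := Real.sqrt_le_sqrt hle
    _ = ‖x0‖ * ‖x1‖ / r ^ 2 := Real.sqrt_sq hrhs

/-- For ℝ-linearly independent `A₀, A₁ ∈ ℂ^{n×n}` and `A_t = (1−t)A₀ + tA₁`,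
the derivative of the Frobenius-normalized path satisfies
`‖d/dt (A_t/‖A_t‖_F)‖_F ≤ ‖A₀‖_F‖A₁‖_F/‖A_t‖_F²` for all `t ∈ [0,1]`. -/
theorem deriv_normalized_segment_le {n : ℕ} (A0 A1 : Matrix (Fin n) (Fin n) ℂ)
    (hind : LinearIndependent ℝ ![A0, A1]) (t : ℝ) (ht : t ∈ Set.Icc (0 : ℝ) 1)
    (D : Matrix (Fin n) (Fin n) ℂ)
    (hD : HasDerivAt
      (fun s : ℝ => ‖(1 - s) • A0 + s • A1‖⁻¹ • ((1 - s) • A0 + s • A1)) D t) :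
    ‖D‖ ≤ ‖A0‖ * ‖A1‖ / ‖(1 - t) • A0 + t • A1‖ ^ 2 := by
  exact deriv_normalized_segment_le_aux A0 A1 hind t D hD
end
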